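/- Let n ≥ 2 and 1 ≤ p ≤ n be integers, and let r ≥ 1, s ≥ 0 be integers. Then (-1)^{r+s+1} · ∑_{i=0}^{s} ((ns+p)(nr-p)/(ni+p)) · C(-i - p/n, s-i) · C(i + p/n, r+i) = (p·r/(r+s)) · C(s + p/n, s) · C(r - p/n, r). -/

import Mathlib

/-- The generalized binomial coefficient C(x, k) = x(x-1)⋯(x-k+1)/k! for x ∈ ℚ. -/
def gchoose (x : ℚ) (k : ℕ) : ℚ :=
  (∏ i ∈ Finset.range k, (x - i)) / (Nat.factorial k)

open Finset

lemma point (x : ℚ) (hx : 0 < x) (r s i : ℕ) (hr : 1 ≤ r) (hi : i ≤ s) :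
    (x + s) * ((r:ℚ) - x) / (x + i) * gchoose (-(i:ℚ) - x) (s-i) * gchoose ((i:ℚ) + x) (r+i)
    = ((x + s) * ((r:ℚ) - x) * (∏ j ∈ range s, (x + j)) * (∏ k ∈ range (r-1), (x - (k+1))))
        * ((-1)^(s-i) / ((s-i).factorial * (r+i).factorial)) := by
  have hxi : x + (i:ℚ) ≠ 0 := by positivity
  have h1 : ∏ j ∈ range (s-i), (-(i:ℚ) - x - j)
      = (-1)^(s-i) * ∏ j ∈ range (s-i), (x + ((i+j : ℕ):ℚ)) := by
    calc ∏ j ∈ range (s-i), (-(i:ℚ) - x - j)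
        = ∏ j ∈ range (s-i), (-1) * (x + ((i+j : ℕ):ℚ)) :=
          prod_congr rfl (fun j _ => by push_cast; ring)
      _ = _ := by rw [Finset.prod_mul_distrib, prod_const, card_range]
  have h2 : (∏ j ∈ range i, (x + (j:ℚ))) * ∏ j ∈ range (s-i), (x + ((i+j : ℕ):ℚ))
      = ∏ j ∈ range s, (x + (j:ℚ)) := by
    have h := Finset.prod_range_add (fun j => x + (j:ℚ)) i (s-i)
    rw [show i + (s-i) = s by omega] at h
    exact h.symm
  have h3 : ∏ j ∈ range (r+i), ((i:ℚ) + x - j)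
      = ((∏ j ∈ range i, (x + (j:ℚ))) * (x + i)) * ∏ k ∈ range (r-1), (x - ((k:ℚ)+1)) := by
    rw [show r + i = (i+1) + (r-1) by omega, Finset.prod_range_add]
    congr 1
    · rw [← Finset.prod_range_succ (fun j => x + (j:ℚ)) i,
        ← Finset.prod_range_reflect (fun j => x + (j:ℚ)) (i+1)]
      refine prod_congr rfl fun j hj => ?_
      simp only [mem_range] at hj
      have : ((i + 1 - 1 - j : ℕ):ℚ) = (i:ℚ) - j := by
        have : i + 1 - 1 - j = i - j := by omega
        rw [this, Nat.cast_sub (by omega)]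
      rw [this]; ring
    · refine prod_congr rfl fun k hk => ?_
      push_cast
      ring
  simp only [gchoose]
  rw [h1, h3]
  rw [div_mul_div_comm, div_mul_div_comm]
  rw [show (x + ↑s) * (↑r - x) * ((-1:ℚ) ^ (s - i) * ∏ j ∈ range (s - i), (x + ↑(i + j))) *
      ((∏ j ∈ range i, (x + ↑j)) * (x + ↑i) * ∏ k ∈ range (r - 1), (x - (↑k + 1)))
      = (x + ↑i) * ((x + ↑s) * (↑r - x) * ((-1:ℚ) ^ (s - i)) *
        (((∏ j ∈ range i, (x + ↑j)) * ∏ j ∈ range (s - i), (x + ↑(i + j))) *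
          ∏ k ∈ range (r - 1), (x - (↑k + 1)))) by ring, h2]
  have hf1 : ((s-i).factorial : ℚ) ≠ 0 := by positivity
  have hf2 : ((r+i).factorial : ℚ) ≠ 0 := by positivity
  field_simp

lemma alt_sum (m : ℕ) (s : ℕ) :
    ∑ k ∈ range (s+1), (-1:ℚ)^k * ((m+1).choose k) = (-1)^s * (m.choose s) := by
  induction s with
  | zero => simp
  | succ s ih =>
    rw [Finset.sum_range_succ, ih, Nat.choose_succ_succ]
    push_cast
    ring

lemma sumB (r' s : ℕ) :
    ∑ i ∈ range (s+1), ((-1:ℚ))^(s-i) / ((s-i).factorial * ((r'+1)+i).factorial)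
      = (-1)^s * ((r'+s).choose s) / ((r'+1)+s).factorial := by
  have key : ∀ i ∈ range (s+1),
      ((-1:ℚ))^(s-i) / ((s-i).factorial * ((r'+1)+i).factorial)
      = (fun k => ((-1:ℚ))^k / (k.factorial * ((r'+1+s)-k).factorial)) (s+1-1-i) := by
    intro i hi
    simp only [mem_range] at hi
    have e1 : s+1-1-i = s-i := by omega
    have e2 : r'+1+s-(s-i) = (r'+1)+i := by omega
    simp only [e1, e2]
  rw [Finset.sum_congr rfl key,
    Finset.sum_range_reflect (fun k => ((-1:ℚ))^k / (k.factorial * ((r'+1+s)-k).factorial)) (s+1)]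
  have key2 : ∀ k ∈ range (s+1),
      ((-1:ℚ))^k / (k.factorial * ((r'+1+s)-k).factorial)
      = (-1)^k * (((r'+s)+1).choose k) / ((r'+1)+s).factorial := by
    intro k hk
    simp only [mem_range] at hk
    rw [Nat.cast_choose ℚ (show k ≤ (r'+s)+1 by omega)]
    have h1 : ((k.factorial : ℚ)) ≠ 0 := by positivity
    have h2 : (((r'+1+s)-k).factorial : ℚ) ≠ 0 := by positivity
    have h3 : (((r'+s)+1).factorial : ℚ) ≠ 0 := by positivity
    have e : (r'+s)+1 - k = (r'+1+s) - k := by omega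
    rw [e, show (r'+s)+1 = (r'+1)+s by omega]
    field_simp
  rw [Finset.sum_congr rfl key2, ← Finset.sum_div]
  rw [alt_sum (r'+s) s]

/-- Proposition 8.1 of the paper: \tilde{q}_{ns+p, nr-p} = q_{ns+p, nr-p}. -/
theorem prop_8_1 (n p r s : ℕ) (hn : 2 ≤ n) (hp1 : 1 ≤ p) (hpn : p ≤ n) (hr : 1 ≤ r) :
    (-1 : ℚ) ^ (r + s + 1) * ∑ i ∈ Finset.range (s + 1),
        (((n : ℚ) * s + p) * ((n : ℚ) * r - p) / ((n : ℚ) * i + p))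
          * gchoose (-(i : ℚ) - (p : ℚ) / (n : ℚ)) (s - i)
          * gchoose ((i : ℚ) + (p : ℚ) / (n : ℚ)) (r + i)
      = ((p : ℚ) * r / ((r : ℚ) + s)) * gchoose ((s : ℚ) + (p : ℚ) / (n : ℚ)) s
          * gchoose ((r : ℚ) - (p : ℚ) / (n : ℚ)) r := by
  obtain ⟨r', rfl⟩ : ∃ r', r = r' + 1 := ⟨r - 1, by omega⟩
  have hn0 : (0:ℚ) < n := by exact_mod_cast (show 0 < n by omega)
  have hp0 : (0:ℚ) < p := by exact_mod_cast hp1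
  set x : ℚ := (p:ℚ)/(n:ℚ) with hxdef
  have hx : 0 < x := by positivity
  have hnx : (n:ℚ) * x = p := by rw [hxdef]; field_simp
  set K : ℚ := (x + s) * (((r'+1 : ℕ):ℚ) - x) * (∏ j ∈ range s, (x + j))
      * (∏ k ∈ range ((r'+1)-1), (x - ((k:ℚ)+1))) with hK
  have hA : ∀ i ∈ range (s+1),
      (((n : ℚ) * s + p) * ((n : ℚ) * (r'+1 : ℕ) - p) / ((n : ℚ) * i + p))
          * gchoose (-(i : ℚ) - x) (s - i) * gchoose ((i : ℚ) + x) ((r'+1) + i)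
      = (n:ℚ) * K * ((-1)^(s-i) / ((s-i).factorial * ((r'+1)+i).factorial)) := by
    intro i hi
    simp only [mem_range] at hi
    have hxi : x + (i:ℚ) ≠ 0 := by positivity
    have e1 : (n : ℚ) * s + p = n * (x + s) := by rw [← hnx]; ring
    have e2 : (n : ℚ) * (r'+1 : ℕ) - p = n * (((r'+1 : ℕ):ℚ) - x) := by rw [← hnx]; ring
    have e3 : (n : ℚ) * i + p = n * (x + i) := by rw [← hnx]; ring
    rw [e1, e2, e3,
      show (n:ℚ) * (x + s) * (n * (((r'+1:ℕ):ℚ) - x)) / (n * (x + i))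
        = (n:ℚ) * ((x + s) * (((r'+1:ℕ):ℚ) - x) / (x + i)) by
          field_simp]
    rw [mul_assoc, mul_assoc, ← mul_assoc ((x + ↑s) * (((r'+1:ℕ):ℚ) - x) / (x + ↑i)),
      point x hx (r'+1) s i (by omega) (by omega), hK, mul_assoc]
    ring
  rw [Finset.sum_congr rfl hA, ← Finset.mul_sum, sumB r' s]
  -- now rewrite RHS gchooses
  have hg1 : gchoose ((s:ℚ) + x) s = (∏ j ∈ range s, (x + (j:ℚ) + 1)) / (s.factorial) := by
    rw [gchoose]
    congr 1
    rw [← Finset.prod_range_reflect (fun j => x + (j:ℚ) + 1) s]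
    refine prod_congr rfl fun j hj => ?_
    simp only [mem_range] at hj
    rw [Nat.cast_sub (by omega : j ≤ s - 1), Nat.cast_sub (by omega : 1 ≤ s)]
    push_cast
    ring
  have hg2 : gchoose (((r'+1:ℕ):ℚ) - x) (r'+1)
      = (∏ k ∈ range (r'+1), ((k:ℚ) + 1 - x)) / ((r'+1).factorial) := by
    rw [gchoose]
    congr 1
    rw [← Finset.prod_range_reflect (fun k => (k:ℚ) + 1 - x) (r'+1)]
    refine prod_congr rfl fun j hj => ?_
    simp only [mem_range] at hj
    rw [show r'+1-1-j = r'-j by omega, Nat.cast_sub (by omega : j ≤ r')]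
    push_cast
    ring
  rw [hg1, hg2]
  have hKval : (n:ℚ) * K = (-1)^(r'+2) * ((p:ℚ) * (∏ j ∈ range s, (x + (j:ℚ) + 1))
      * (∏ k ∈ range (r'+1), ((k:ℚ) + 1 - x))) := by
    have hK1 : (x + (s:ℚ)) * (∏ j ∈ range s, (x + j)) = x * ∏ j ∈ range s, (x + (j:ℚ) + 1) := by
      have a := Finset.prod_range_succ (fun j => x + (j:ℚ)) s
      have b := Finset.prod_range_succ' (fun j => x + (j:ℚ)) s
      rw [a] at b
      push_cast at b
      calc (x + (s:ℚ)) * (∏ j ∈ range s, (x + j))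
          = (∏ j ∈ range s, (x + j)) * (x + s) := by ring
        _ = (∏ j ∈ range s, (x + ((j:ℚ) + 1))) * (x + 0) := b
        _ = x * ∏ j ∈ range s, (x + (j:ℚ) + 1) := by
            rw [add_zero]
            rw [show (∏ j ∈ range s, (x + ((j:ℚ) + 1))) = ∏ j ∈ range s, (x + (j:ℚ) + 1) from
              prod_congr rfl fun j _ => by ring]
            ring
    have hK2 : (((r'+1 : ℕ):ℚ) - x) * (∏ k ∈ range ((r'+1)-1), (x - ((k:ℚ)+1)))
        = (-1)^(r'+2) * ∏ k ∈ range (r'+1), ((k:ℚ) + 1 - x) := by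
      have a := Finset.prod_range_succ (fun k => x - ((k:ℚ)+1)) r'
      have c : ∏ k ∈ range (r'+1), (x - ((k:ℚ)+1))
          = (-1)^(r'+1) * ∏ k ∈ range (r'+1), ((k:ℚ) + 1 - x) := by
        calc ∏ k ∈ range (r'+1), (x - ((k:ℚ)+1))
            = ∏ k ∈ range (r'+1), (-1) * ((k:ℚ) + 1 - x) :=
              prod_congr rfl fun k _ => by ring
          _ = _ := by rw [Finset.prod_mul_distrib, prod_const, card_range]
      rw [show (r'+1)-1 = r' by omega]
      have : (((r'+1 : ℕ):ℚ) - x) * (∏ k ∈ range r', (x - ((k:ℚ)+1)))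
          = -(∏ k ∈ range (r'+1), (x - ((k:ℚ)+1))) := by
        rw [a]
        push_cast
        ring
      rw [this, c]
      ring
    rw [hK, show (x + ↑s) * ((↑(r' + 1):ℚ) - x) * (∏ j ∈ range s, (x + ↑j)) *
        ∏ k ∈ range (r' + 1 - 1), (x - (↑k + 1))
        = ((x + ↑s) * (∏ j ∈ range s, (x + ↑j))) *
          (((↑(r' + 1):ℚ) - x) * ∏ k ∈ range (r' + 1 - 1), (x - (↑k + 1))) by ring,
      hK1, hK2, ← hnx]
    ring
  rw [hKval]
  have hfac : (((r'+s).choose s : ℚ)) * ((((r'+1):ℕ):ℚ) + s) * (s.factorial) * ((r'+1).factorial)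
      = (((r'+1):ℕ):ℚ) * (((r'+1)+s).factorial) := by
    have h := Nat.choose_mul_factorial_mul_factorial (show s ≤ r'+s from by omega)
    rw [show r'+s-s = r' by omega] at h
    have hc : (((r'+s).choose s : ℚ)) * (s.factorial) * (r'.factorial) = ((r'+s).factorial) := by
      exact_mod_cast congrArg (Nat.cast : ℕ → ℚ) h
    rw [show (r'+1)+s = (r'+s)+1 by omega, Nat.factorial_succ (r'+s), Nat.factorial_succ r']
    push_cast
    push_cast at hc
    linear_combination ((r':ℚ)+s+1) * ((r':ℚ)+1) * hc
  have hsign : ((-1:ℚ))^(r'+1+s+1) * ((-1)^(r'+2) * (-1)^s) = 1 := by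
    rw [← pow_add, ← pow_add, show r'+1+s+1+(r'+2+s) = 2*(r'+s+2) by ring, pow_mul]
    norm_num
  have hF : ((((r'+1)+s).factorial : ℚ)) ≠ 0 := by positivity
  have hs : ((s.factorial : ℚ)) ≠ 0 := by positivity
  have hrf : (((r'+1).factorial : ℚ)) ≠ 0 := by positivity
  have hrs : ((((r'+1):ℕ):ℚ) + s) ≠ 0 := by positivity
  calc (-1:ℚ) ^ (r'+1 + s + 1) *
        ((-1)^(r'+2) * ((p:ℚ) * (∏ j ∈ range s, (x + (j:ℚ) + 1))
          * (∏ k ∈ range (r'+1), ((k:ℚ) + 1 - x))) *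
          ((-1)^s * ((r'+s).choose s) / ((r'+1)+s).factorial))
      = ((-1:ℚ)^(r'+1+s+1) * ((-1)^(r'+2) * (-1)^s)) *
        ((p:ℚ) * (∏ j ∈ range s, (x + (j:ℚ) + 1)) * (∏ k ∈ range (r'+1), ((k:ℚ) + 1 - x))
          * (((r'+s).choose s) / ((r'+1)+s).factorial)) := by ring
    _ = _ := by
      rw [hsign, one_mul]
      field_simp
      push_cast at hfac ⊢
      linear_combination (∏ k ∈ range (r'+1), ((k:ℚ) + 1 - x)) * hfac
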